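/- Fourier representation of the Fresnel diffraction integral: let k > 0 and z > 0 be real, and let u : ℝ² → ℂ be integrable with integrable Fourier transform 𝓕u. Then for every (X,Y) ∈ ℝ², ∫∫_{ℝ²} (−ik e^{ikz}/(2πz)) exp(ik((X−x)² + (Y−y)²)/(2z)) u(x,y) dx dy = ∫∫_{ℝ²} e^{ikz} exp(−i(2π²z/k)(ξ² + η²)) 𝓕u(ξ,η) e^{2πi(Xξ + Yη)} dξ dη, where both integrals converge absolutely. -/

import Mathlib

open MeasureTheory Real Filter Topology Complex

lemma gauss1 {b : ℂ} (hb : 0 < b.re) (s : ℝ) :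
    (∫ x : ℝ, Complex.exp (-b * (x:ℂ) ^ 2) * Complex.exp (2 * (π:ℂ) * Complex.I * (x * s))) =
      ((π:ℂ) / b) ^ (1 / 2 : ℂ) * Complex.exp (-(π:ℂ) ^ 2 * (s:ℂ) ^ 2 / b) := by
  have hbne : b ≠ 0 := by intro h; rw [h] at hb; simp at hb
  have h := integral_cexp_quadratic (b := -b) (by simpa using hb) (2 * (π:ℂ) * Complex.I * s) 0
  rw [neg_neg] at h
  have h1 : ∀ x : ℝ, -b * (x:ℂ) ^ 2 + 2 * (π:ℂ) * Complex.I * (s:ℂ) * x + 0 =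
      (-b * (x:ℂ) ^ 2) + (2 * (π:ℂ) * Complex.I * ((x:ℂ) * s)) := by intro x; ring
  simp_rw [h1, Complex.exp_add] at h
  rw [h]
  congr 1
  have hI : (2 * (π:ℂ) * Complex.I * s) ^ 2 = -(4 * (π:ℂ)^2 * (s:ℂ)^2) := by
    have := Complex.I_sq; ring_nf; rw [Complex.I_sq]; ring
  rw [hI]
  field_simp
  ring

lemma gauss2 {b : ℂ} (hb : 0 < b.re) (s t : ℝ) :
    (∫ q : ℝ × ℝ, Complex.exp (-b * ((q.1:ℂ) ^ 2 + (q.2:ℂ) ^ 2)) *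
        Complex.exp (2 * (π:ℂ) * Complex.I * (q.1 * s + q.2 * t))) =
      ((π:ℂ) / b) * Complex.exp (-(π:ℂ) ^ 2 * ((s:ℂ) ^ 2 + (t:ℂ) ^ 2) / b) := by
  have hbne : b ≠ 0 := by intro h; rw [h] at hb; simp at hb
  have hpb : (π:ℂ) / b ≠ 0 := div_ne_zero (by exact_mod_cast Real.pi_ne_zero) hbne
  have key : ∀ q : ℝ × ℝ, Complex.exp (-b * ((q.1:ℂ) ^ 2 + (q.2:ℂ) ^ 2)) *
        Complex.exp (2 * (π:ℂ) * Complex.I * (q.1 * s + q.2 * t)) =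
      (Complex.exp (-b * (q.1:ℂ) ^ 2) * Complex.exp (2 * (π:ℂ) * Complex.I * (q.1 * s))) *
      (Complex.exp (-b * (q.2:ℂ) ^ 2) * Complex.exp (2 * (π:ℂ) * Complex.I * (q.2 * t))) := by
    intro q
    rw [← Complex.exp_add, ← Complex.exp_add, ← Complex.exp_add, ← Complex.exp_add]
    congr 1; ring
  simp_rw [key]
  rw [Measure.volume_eq_prod, MeasureTheory.integral_prod_mul
    (fun x : ℝ => Complex.exp (-b * (x:ℂ) ^ 2) * Complex.exp (2 * (π:ℂ) * Complex.I * (x * s)))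
    (fun y : ℝ => Complex.exp (-b * (y:ℂ) ^ 2) * Complex.exp (2 * (π:ℂ) * Complex.I * (y * t))),
    gauss1 hb s, gauss1 hb t]
  have h12 : ((π:ℂ)/b) ^ (1/2:ℂ) * ((π:ℂ)/b) ^ (1/2:ℂ) = (π:ℂ)/b := by
    rw [← Complex.cpow_add _ _ hpb]; norm_num
  rw [mul_mul_mul_comm, h12, ← Complex.exp_add]
  congr 1
  ring

noncomputable def fourier2 (f : ℝ × ℝ → ℂ) : ℝ × ℝ → ℂ :=
  fun q => ∫ p : ℝ × ℝ, f p * Complex.exp (-2 * (π : ℂ) * Complex.I * (p.1 * q.1 + p.2 * q.2))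

lemma norm_pure_phase (r : ℝ) : ‖Complex.exp ((r:ℂ) * Complex.I)‖ = 1 := by
  simpa using Complex.abs_exp_ofReal_mul_I r

lemma gauss2_re_integrable {c : ℝ} (hc : 0 < c) :
    Integrable (fun q : ℝ × ℝ => Real.exp (-c * (q.1 ^ 2 + q.2 ^ 2))) := by
  have h1 : Integrable (fun x : ℝ => Real.exp (-c * x ^ 2)) := integrable_exp_neg_mul_sq hc
  have := h1.mul_prod h1
  rw [← Measure.volume_eq_prod] at this
  apply this.congr
  filter_upwards with q
  rw [← Real.exp_add]; ring_nf

lemma fresnel_swap (u : ℝ × ℝ → ℂ) (hu : Integrable u) {b : ℂ} (hb : 0 < b.re) (X Y : ℝ) :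
    (∫ q : ℝ × ℝ, Complex.exp (-b * ((q.1:ℂ) ^ 2 + (q.2:ℂ) ^ 2)) * fourier2 u q *
        Complex.exp (2 * (π:ℂ) * Complex.I * (X * q.1 + Y * q.2))) =
    ∫ p : ℝ × ℝ, ((π:ℂ) / b) *
        Complex.exp (-(π:ℂ) ^ 2 * (((X:ℂ) - p.1) ^ 2 + ((Y:ℂ) - p.2) ^ 2) / b) * u p := by
  have hbne : b ≠ 0 := by intro h; rw [h] at hb; simp at hb
  -- the two-variable integrand
  set F : (ℝ × ℝ) → (ℝ × ℝ) → ℂ := fun q p =>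
    u p * Complex.exp (-b * ((q.1:ℂ) ^ 2 + (q.2:ℂ) ^ 2)) *
      Complex.exp (2 * (π:ℂ) * Complex.I * (((X:ℂ) - p.1) * q.1 + ((Y:ℂ) - p.2) * q.2)) with hF
  have hFint : Integrable (Function.uncurry F) ((volume : Measure (ℝ × ℝ)).prod volume) := by
    have hdom : Integrable (fun w : (ℝ × ℝ) × (ℝ × ℝ) =>
        Real.exp (-b.re * (w.1.1 ^ 2 + w.1.2 ^ 2)) * ‖u w.2‖)
        ((volume : Measure (ℝ × ℝ)).prod volume) :=
      (gauss2_re_integrable hb).mul_prod hu.norm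
    apply Integrable.mono' hdom
    · apply AEStronglyMeasurable.mul
      apply AEStronglyMeasurable.mul
      · exact (hu.aestronglyMeasurable.comp_quasiMeasurePreserving
          Measure.quasiMeasurePreserving_snd)
      · apply Continuous.aestronglyMeasurable; fun_prop
      · apply Continuous.aestronglyMeasurable; fun_prop
    · filter_upwards with w
      rw [hF]
      simp only [Function.uncurry, norm_mul]
      have e1 : ‖Complex.exp (-b * ((w.1.1:ℂ) ^ 2 + (w.1.2:ℂ) ^ 2))‖
          = Real.exp (-b.re * (w.1.1 ^ 2 + w.1.2 ^ 2)) := by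
        rw [Complex.norm_exp]
        congr 1
        have : -b * ((w.1.1:ℂ) ^ 2 + (w.1.2:ℂ) ^ 2)
            = -b * ((((w.1.1 ^ 2 + w.1.2 ^ 2) : ℝ)):ℂ) := by push_cast; ring
        rw [this, Complex.mul_re]
        simp [← Complex.ofReal_pow]
      have e2 : ‖Complex.exp (2 * (π:ℂ) * Complex.I *
          (((X:ℂ) - w.2.1) * w.1.1 + ((Y:ℂ) - w.2.2) * w.1.2))‖ = 1 := by
        have : 2 * (π:ℂ) * Complex.I * (((X:ℂ) - w.2.1) * w.1.1 + ((Y:ℂ) - w.2.2) * w.1.2)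
            = ((2 * π * ((X - w.2.1) * w.1.1 + (Y - w.2.2) * w.1.2) : ℝ) : ℂ) * Complex.I := by
          push_cast; ring
        rw [this, norm_pure_phase]
      rw [e1, e2, mul_one]
      rw [mul_comm]
  -- Step 1: rewrite the q-integrand as an inner integral over p
  have step1 : ∀ q : ℝ × ℝ, Complex.exp (-b * ((q.1:ℂ) ^ 2 + (q.2:ℂ) ^ 2)) * fourier2 u q *
        Complex.exp (2 * (π:ℂ) * Complex.I * (X * q.1 + Y * q.2)) = ∫ p : ℝ × ℝ, F q p := by
    intro q
    rw [fourier2, ← integral_const_mul, ← integral_mul_const]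
    congr 1; ext p
    have hphase : Complex.exp (-2 * (π:ℂ) * Complex.I * (p.1 * q.1 + p.2 * q.2)) *
        Complex.exp (2 * (π:ℂ) * Complex.I * (X * q.1 + Y * q.2)) =
        Complex.exp (2 * (π:ℂ) * Complex.I * (((X:ℂ) - p.1) * q.1 + ((Y:ℂ) - p.2) * q.2)) := by
      rw [← Complex.exp_add]; congr 1; push_cast; ring
    rw [hF]; simp only
    rw [← hphase]; ring
  -- Step 2: swap and evaluate the inner Gaussian integral
  simp_rw [step1]
  rw [MeasureTheory.integral_integral_swap (f := F) (μ := (volume : Measure (ℝ × ℝ)))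
    (ν := (volume : Measure (ℝ × ℝ))) hFint]
  congr 1; ext p
  have hFq : ∀ q : ℝ × ℝ, F q p = u p * (Complex.exp (-b * ((q.1:ℂ) ^ 2 + (q.2:ℂ) ^ 2)) *
      Complex.exp (2 * (π:ℂ) * Complex.I *
        (q.1 * ((X - p.1 : ℝ):ℂ) + q.2 * ((Y - p.2 : ℝ):ℂ)))) := by
    intro q; rw [hF]; simp only; push_cast; ring
  simp_rw [hFq]
  rw [integral_const_mul, gauss2 hb (X - p.1) (Y - p.2)]
  push_cast
  ring

lemma norm_cexp_neg_mul_sq' (w : ℂ) (x y : ℝ) :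
    ‖Complex.exp (-w * ((x:ℂ) ^ 2 + (y:ℂ) ^ 2))‖ = Real.exp (-w.re * (x ^ 2 + y ^ 2)) := by
  rw [Complex.norm_exp]
  congr 1
  have h : -w * ((x:ℂ) ^ 2 + (y:ℂ) ^ 2) = -w * (((x ^ 2 + y ^ 2 : ℝ)):ℂ) := by push_cast; ring
  rw [h, Complex.mul_re]
  simp [← Complex.ofReal_pow]

lemma norm_cexp_real_div_le_one {w : ℂ} (hw : 0 ≤ w.re) {a : ℝ} (ha : a ≤ 0) :
    ‖Complex.exp ((a:ℂ) / w)‖ ≤ 1 := by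
  rw [Complex.norm_exp]
  have h : ((a:ℂ) / w).re = a * w.re / Complex.normSq w := by
    rw [Complex.div_re]; simp
  rw [h]
  calc Real.exp (a * w.re / Complex.normSq w) ≤ Real.exp 0 := by
        apply Real.exp_le_exp.mpr
        apply div_nonpos_of_nonpos_of_nonneg (by nlinarith) (Complex.normSq_nonneg w)
    _ = 1 := Real.exp_zero

theorem fresnel_angular_spectrum_representation (k z : ℝ) (hk : 0 < k) (hz : 0 < z)
    (u : ℝ × ℝ → ℂ) (hu : Integrable u) (hFu : Integrable (fourier2 u)) (X Y : ℝ) :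
    Integrable (fun p : ℝ × ℝ =>
      -Complex.I * k * Complex.exp (Complex.I * k * z) / (2 * π * z) *
        Complex.exp (Complex.I * k * ((X - p.1) ^ 2 + (Y - p.2) ^ 2) / (2 * z)) * u p) ∧
    Integrable (fun q : ℝ × ℝ =>
      Complex.exp (Complex.I * k * z) *
        Complex.exp (-Complex.I * (2 * (π : ℂ) ^ 2 * z / k) * (q.1 ^ 2 + q.2 ^ 2)) *
        fourier2 u q * Complex.exp (2 * (π : ℂ) * Complex.I * (X * q.1 + Y * q.2))) ∧
    (∫ p : ℝ × ℝ,
      -Complex.I * k * Complex.exp (Complex.I * k * z) / (2 * π * z) *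
        Complex.exp (Complex.I * k * ((X - p.1) ^ 2 + (Y - p.2) ^ 2) / (2 * z)) * u p) =
    (∫ q : ℝ × ℝ,
      Complex.exp (Complex.I * k * z) *
        Complex.exp (-Complex.I * (2 * (π : ℂ) ^ 2 * z / k) * (q.1 ^ 2 + q.2 ^ 2)) *
        fourier2 u q * Complex.exp (2 * (π : ℂ) * Complex.I * (X * q.1 + Y * q.2))) := by
  have hπ : (0:ℝ) < π := Real.pi_pos
  have hkne : (k:ℂ) ≠ 0 := Complex.ofReal_ne_zero.mpr hk.ne'
  have hzne : (z:ℂ) ≠ 0 := Complex.ofReal_ne_zero.mpr hz.ne'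
  have hπne : ((π:ℝ):ℂ) ≠ 0 := Complex.ofReal_ne_zero.mpr hπ.ne'
  -- Part 1: integrability of the Fresnel integrand
  have hA : ‖Complex.exp (Complex.I * k * z)‖ = 1 := by
    have : Complex.I * (k:ℂ) * (z:ℂ) = ((k * z : ℝ):ℂ) * Complex.I := by push_cast; ring
    rw [this, norm_pure_phase]
  have hint1 : Integrable (fun p : ℝ × ℝ =>
      -Complex.I * k * Complex.exp (Complex.I * k * z) / (2 * π * z) *
        Complex.exp (Complex.I * k * ((X - p.1) ^ 2 + (Y - p.2) ^ 2) / (2 * z)) * u p) := by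
    have := hu.bdd_mul (f := fun p : ℝ × ℝ =>
        -Complex.I * k * Complex.exp (Complex.I * k * z) / (2 * π * z) *
          Complex.exp (Complex.I * k * (((X:ℂ) - p.1) ^ 2 + ((Y:ℂ) - p.2) ^ 2) / (2 * z)))
      (by apply Continuous.aestronglyMeasurable; fun_prop)
      (c := ‖-Complex.I * k * Complex.exp (Complex.I * k * z) / (2 * π * z)‖) (Filter.Eventually.of_forall fun p => by
        rw [norm_mul]
        have : Complex.I * k * (((X:ℂ) - p.1) ^ 2 + ((Y:ℂ) - p.2) ^ 2) / (2 * z) =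
            ((k * ((X - p.1) ^ 2 + (Y - p.2) ^ 2) / (2 * z) : ℝ):ℂ) * Complex.I := by
          push_cast; ring
        rw [this, norm_pure_phase, mul_one])
    exact this
  refine ⟨hint1, ?_, ?_⟩
  -- Part 2: integrability of the angular-spectrum integrand
  · have h2 := hFu.bdd_mul (f := fun q : ℝ × ℝ =>
        Complex.exp (Complex.I * k * z) *
          Complex.exp (-Complex.I * (2 * (π : ℂ) ^ 2 * z / k) * ((q.1:ℂ) ^ 2 + (q.2:ℂ) ^ 2)) *
          Complex.exp (2 * (π : ℂ) * Complex.I * (X * q.1 + Y * q.2)))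
      (by apply Continuous.aestronglyMeasurable; fun_prop)
      (c := 1) (Filter.Eventually.of_forall fun q => by
        rw [norm_mul, norm_mul, hA]
        have e1 : -Complex.I * (2 * (π : ℂ) ^ 2 * z / k) * ((q.1:ℂ) ^ 2 + (q.2:ℂ) ^ 2) =
            ((-(2 * π ^ 2 * z / k * (q.1 ^ 2 + q.2 ^ 2)) : ℝ):ℂ) * Complex.I := by
          push_cast; ring
        have e2 : 2 * (π : ℂ) * Complex.I * ((X:ℂ) * q.1 + (Y:ℂ) * q.2) =
            ((2 * π * (X * q.1 + Y * q.2) : ℝ):ℂ) * Complex.I := by push_cast; ring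
        rw [e1, e2, norm_pure_phase, norm_pure_phase]; norm_num)
    have h2' : Integrable (fun q : ℝ × ℝ =>
        (Complex.exp (Complex.I * k * z) *
          Complex.exp (-Complex.I * (2 * (π : ℂ) ^ 2 * z / k) * ((q.1:ℂ) ^ 2 + (q.2:ℂ) ^ 2)) *
          Complex.exp (2 * (π : ℂ) * Complex.I * (X * q.1 + Y * q.2))) * fourier2 u q) := h2
    exact h2'.congr (Filter.Eventually.of_forall fun q => by ring)
  -- Part 3: the equality
  · set c : ℝ := 2 * π ^ 2 * z / k with hc
    have hcpos : 0 < c := by rw [hc]; positivity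
    set bb : ℝ → ℂ := fun ε => (ε:ℂ) + Complex.I * (c:ℂ) with hbb
    have hbbre : ∀ ε : ℝ, (bb ε).re = ε := by intro ε; simp [hbb]
    have hb0 : bb 0 = Complex.I * (c:ℂ) := by simp [hbb]
    have hbbne : ∀ ε : ℝ, bb ε ≠ 0 := by
      intro ε h
      have him : (bb ε).im = c := by simp [hbb]
      rw [h] at him
      simp at him
      exact hcpos.ne him
    have hbnorm : ∀ ε : ℝ, c ≤ ‖bb ε‖ := by
      intro ε
      calc c = |(bb ε).im| := by simp [hbb, abs_of_pos hcpos]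
        _ ≤ ‖bb ε‖ := Complex.abs_im_le_norm _
        _ = ‖bb ε‖ := rfl
    have hcast : Complex.I * (2 * (π : ℂ) ^ 2 * z / k) = bb 0 := by
      rw [hb0, hc]; push_cast; ring
    clear_value bb c
    -- the two families of integrands
    set Fq : ℝ → (ℝ × ℝ) → ℂ := fun ε q =>
      Complex.exp (Complex.I * k * z) *
        Complex.exp (-(bb ε) * ((q.1:ℂ) ^ 2 + (q.2:ℂ) ^ 2)) *
        fourier2 u q * Complex.exp (2 * (π : ℂ) * Complex.I * (X * q.1 + Y * q.2)) with hFq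
    set Fp : ℝ → (ℝ × ℝ) → ℂ := fun ε p =>
      Complex.exp (Complex.I * k * z) *
        ((π:ℂ) / (bb ε) *
          Complex.exp (-(π:ℂ) ^ 2 * (((X:ℂ) - p.1) ^ 2 + ((Y:ℂ) - p.2) ^ 2) / (bb ε)) * u p)
      with hFpdef
    clear_value Fq Fp
    -- for positive ε the two integrals agree (Fubini + Gaussian integral)
    have key : ∀ᶠ ε in 𝓝[>] (0:ℝ), (∫ q : ℝ × ℝ, Fq ε q) = ∫ p : ℝ × ℝ, Fp ε p := by
      filter_upwards [self_mem_nhdsWithin] with ε hε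
      have hb : 0 < (bb ε).re := by rw [hbbre]; exact hε
      have e : ∀ q : ℝ × ℝ, Fq ε q =
          Complex.exp (Complex.I * k * z) *
            (Complex.exp (-(bb ε) * ((q.1:ℂ) ^ 2 + (q.2:ℂ) ^ 2)) * fourier2 u q *
              Complex.exp (2 * (π : ℂ) * Complex.I * (X * q.1 + Y * q.2))) := by
        intro q; simp only [hFq]; ring
      simp_rw [e]
      rw [integral_const_mul, fresnel_swap u hu hb X Y, ← integral_const_mul]
      simp only [hFpdef]
    -- convergence of the q-side
    have hQ : Tendsto (fun ε => ∫ q : ℝ × ℝ, Fq ε q) (𝓝[>] (0:ℝ)) (𝓝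
        (∫ q : ℝ × ℝ, Complex.exp (Complex.I * k * z) *
          Complex.exp (-Complex.I * (2 * (π : ℂ) ^ 2 * z / k) * (q.1 ^ 2 + q.2 ^ 2)) *
          fourier2 u q * Complex.exp (2 * (π : ℂ) * Complex.I * (X * q.1 + Y * q.2)))) := by
      apply tendsto_integral_filter_of_dominated_convergence (fun q => ‖fourier2 u q‖)
      · filter_upwards with ε
        simp only [hFq]
        exact ((Continuous.aestronglyMeasurable (f := fun q : ℝ × ℝ =>
            Complex.exp (Complex.I * k * z) *
              Complex.exp (-(bb ε) * ((q.1:ℂ) ^ 2 + (q.2:ℂ) ^ 2))) (by fun_prop)).mul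
          hFu.aestronglyMeasurable).mul
          (Continuous.aestronglyMeasurable (f := fun q : ℝ × ℝ =>
            Complex.exp (2 * (π : ℂ) * Complex.I * (X * q.1 + Y * q.2))) (by fun_prop))
      · filter_upwards [self_mem_nhdsWithin] with ε hε
        filter_upwards with q
        simp only [hFq]
        simp only [norm_mul]
        rw [hA, norm_cexp_neg_mul_sq']
        have e2 : ‖Complex.exp (2 * (π : ℂ) * Complex.I * ((X:ℂ) * q.1 + (Y:ℂ) * q.2))‖ = 1 := by
          have h3 : 2 * (π : ℂ) * Complex.I * ((X:ℂ) * q.1 + (Y:ℂ) * q.2)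
              = ((2 * π * (X * q.1 + Y * q.2) : ℝ):ℂ) * Complex.I := by push_cast; ring
          rw [h3, norm_pure_phase]
        rw [e2]
        have hle : Real.exp (-(bb ε).re * (q.1 ^ 2 + q.2 ^ 2)) ≤ 1 := by
          calc Real.exp (-(bb ε).re * (q.1 ^ 2 + q.2 ^ 2)) ≤ Real.exp 0 := by
                apply Real.exp_le_exp.mpr
                rw [hbbre]
                nlinarith [sq_nonneg q.1, sq_nonneg q.2, (Set.mem_Ioi.mp hε).le]
            _ = 1 := Real.exp_zero
        nlinarith [norm_nonneg (fourier2 u q), Real.exp_nonneg (-(bb ε).re * (q.1 ^ 2 + q.2 ^ 2))]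
      · exact hFu.norm
      · filter_upwards with q
        have hbbt : Tendsto bb (𝓝[>] (0:ℝ)) (𝓝 (bb 0)) := by
          rw [hbb]
          apply Tendsto.mono_left _ nhdsWithin_le_nhds
          exact Continuous.tendsto (by fun_prop) 0
        have hexp : Tendsto (fun ε => Complex.exp (-(bb ε) * ((q.1:ℂ) ^ 2 + (q.2:ℂ) ^ 2)))
            (𝓝[>] (0:ℝ)) (𝓝 (Complex.exp (-(bb 0) * ((q.1:ℂ) ^ 2 + (q.2:ℂ) ^ 2)))) :=
          (Complex.continuous_exp.tendsto _).comp (hbbt.neg.mul tendsto_const_nhds)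
        have h4 : Tendsto (fun ε => Fq ε q) (𝓝[>] (0:ℝ)) (𝓝
            (Complex.exp (Complex.I * k * z) *
              Complex.exp (-(bb 0) * ((q.1:ℂ) ^ 2 + (q.2:ℂ) ^ 2)) *
              fourier2 u q * Complex.exp (2 * (π : ℂ) * Complex.I * (X * q.1 + Y * q.2)))) := by
          simp only [hFq]
          exact ((tendsto_const_nhds.mul hexp).mul tendsto_const_nhds).mul tendsto_const_nhds
        have e5 : Complex.exp (Complex.I * k * z) *
              Complex.exp (-(bb 0) * ((q.1:ℂ) ^ 2 + (q.2:ℂ) ^ 2)) *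
              fourier2 u q * Complex.exp (2 * (π : ℂ) * Complex.I * (X * q.1 + Y * q.2))
            = Complex.exp (Complex.I * k * z) *
              Complex.exp (-Complex.I * (2 * (π : ℂ) ^ 2 * z / k) * ((q.1:ℂ) ^ 2 + (q.2:ℂ) ^ 2)) *
              fourier2 u q * Complex.exp (2 * (π : ℂ) * Complex.I * (X * q.1 + Y * q.2)) := by
          rw [← hcast]; ring_nf
        rw [e5] at h4
        exact h4
    -- convergence of the p-side
    have hP : Tendsto (fun ε => ∫ p : ℝ × ℝ, Fp ε p) (𝓝[>] (0:ℝ)) (𝓝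
        (∫ p : ℝ × ℝ, -Complex.I * k * Complex.exp (Complex.I * k * z) / (2 * π * z) *
          Complex.exp (Complex.I * k * ((X - p.1) ^ 2 + (Y - p.2) ^ 2) / (2 * z)) * u p)) := by
      apply tendsto_integral_filter_of_dominated_convergence (fun p => π / c * ‖u p‖)
      · filter_upwards with ε
        apply AEStronglyMeasurable.congr
          ((Continuous.aestronglyMeasurable (f := fun p : ℝ × ℝ =>
            Complex.exp (Complex.I * k * z) * ((π:ℂ) / (bb ε) *
              Complex.exp (-(π:ℂ) ^ 2 * (((X:ℂ) - p.1) ^ 2 + ((Y:ℂ) - p.2) ^ 2) / (bb ε))))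
            (by fun_prop)).mul hu.aestronglyMeasurable)
        filter_upwards with p
        simp only [hFpdef, Pi.mul_apply]; ring
      · filter_upwards [self_mem_nhdsWithin] with ε hε
        filter_upwards with p
        simp only [hFpdef]
        simp only [norm_mul]
        rw [hA, one_mul]
        have hr : (0:ℝ) ≤ (X - p.1) ^ 2 + (Y - p.2) ^ 2 := by positivity
        have e6 : -(π:ℂ) ^ 2 * (((X:ℂ) - p.1) ^ 2 + ((Y:ℂ) - p.2) ^ 2) / (bb ε)
            = ((-(π ^ 2 * ((X - p.1) ^ 2 + (Y - p.2) ^ 2)) : ℝ):ℂ) / (bb ε) := by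
          push_cast; ring
        have hexp1 : ‖Complex.exp (-(π:ℂ) ^ 2 * (((X:ℂ) - p.1) ^ 2 + ((Y:ℂ) - p.2) ^ 2) / (bb ε))‖
            ≤ 1 := by
          rw [e6]
          apply norm_cexp_real_div_le_one (by rw [hbbre]; exact hε.le)
          nlinarith [sq_nonneg π]
        have hdiv : ‖(π:ℂ) / (bb ε)‖ ≤ π / c := by
          rw [norm_div, Complex.norm_real, Real.norm_eq_abs, abs_of_pos hπ]
          gcongr
          exact hbnorm ε
        calc ‖(π:ℂ) / bb ε‖ * ‖Complex.exp (-(π:ℂ) ^ 2 *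
              (((X:ℂ) - p.1) ^ 2 + ((Y:ℂ) - p.2) ^ 2) / (bb ε))‖ * ‖u p‖
            ≤ (π / c) * 1 * ‖u p‖ := by gcongr
            _ = π / c * ‖u p‖ := by ring
      · exact hu.norm.const_mul _
      · filter_upwards with p
        have hbbt : Tendsto bb (𝓝[>] (0:ℝ)) (𝓝 (bb 0)) := by
          rw [hbb]
          apply Tendsto.mono_left _ nhdsWithin_le_nhds
          exact Continuous.tendsto (by fun_prop) 0
        have hdivt : Tendsto (fun ε => (π:ℂ) / (bb ε)) (𝓝[>] (0:ℝ)) (𝓝 ((π:ℂ) / (bb 0))) :=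
          tendsto_const_nhds.div hbbt (hbbne 0)
        have hexpt : Tendsto (fun ε => Complex.exp (-(π:ℂ) ^ 2 *
            (((X:ℂ) - p.1) ^ 2 + ((Y:ℂ) - p.2) ^ 2) / (bb ε))) (𝓝[>] (0:ℝ))
            (𝓝 (Complex.exp (-(π:ℂ) ^ 2 *
            (((X:ℂ) - p.1) ^ 2 + ((Y:ℂ) - p.2) ^ 2) / (bb 0)))) :=
          (Complex.continuous_exp.tendsto _).comp (tendsto_const_nhds.div hbbt (hbbne 0))
        have h7 : Tendsto (fun ε => Fp ε p) (𝓝[>] (0:ℝ)) (𝓝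
            (Complex.exp (Complex.I * k * z) * ((π:ℂ) / (bb 0) *
              Complex.exp (-(π:ℂ) ^ 2 * (((X:ℂ) - p.1) ^ 2 + ((Y:ℂ) - p.2) ^ 2) / (bb 0)) *
              u p))) := by
          simp only [hFpdef]
          exact tendsto_const_nhds.mul ((hdivt.mul hexpt).mul tendsto_const_nhds)
        have e8 : Complex.exp (Complex.I * k * z) * ((π:ℂ) / (bb 0) *
              Complex.exp (-(π:ℂ) ^ 2 * (((X:ℂ) - p.1) ^ 2 + ((Y:ℂ) - p.2) ^ 2) / (bb 0)) * u p)
            = -Complex.I * k * Complex.exp (Complex.I * k * z) / (2 * π * z) *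
              Complex.exp (Complex.I * k * (((X:ℂ) - p.1) ^ 2 + ((Y:ℂ) - p.2) ^ 2) / (2 * z)) *
              u p := by
          have hcne : (c:ℂ) ≠ 0 := Complex.ofReal_ne_zero.mpr hcpos.ne'
          have h2z : (2:ℂ) * π * z ≠ 0 := by
            exact mul_ne_zero (mul_ne_zero two_ne_zero hπne) hzne
          have h2z' : (2:ℂ) * z ≠ 0 := mul_ne_zero two_ne_zero hzne
          have e9 : (π:ℂ) / (bb 0) = -Complex.I * k / (2 * π * z) := by
            rw [hb0, div_eq_div_iff (mul_ne_zero Complex.I_ne_zero hcne) h2z, hc]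
            push_cast
            field_simp
            ring_nf
            simp [Complex.I_sq]
            all_goals ring
          have e10 : -(π:ℂ) ^ 2 * (((X:ℂ) - p.1) ^ 2 + ((Y:ℂ) - p.2) ^ 2) / (bb 0)
              = Complex.I * k * (((X:ℂ) - p.1) ^ 2 + ((Y:ℂ) - p.2) ^ 2) / (2 * z) := by
            rw [hb0, div_eq_div_iff (mul_ne_zero Complex.I_ne_zero hcne) h2z', hc]
            push_cast
            field_simp
            ring_nf
            simp [Complex.I_sq]
            all_goals ring
          rw [e9, e10]; ring
        rw [e8] at h7
        exact h7
    exact tendsto_nhds_unique hP (Filter.Tendsto.congr' key hQ)
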